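/- Let V₁ and V₂ be isometries defining irreducible quantum Markov chains with the same environment dimension k and system dimensions d₁ and d₂, with stationary states ρ₁ˢˢ, ρ₂ˢˢ. Suppose the chains are output equivalent, i.e. for every n ≥ 1 and all words i, j of length n, tr(K_{1,i} ρ₁ˢˢ K_{1,j}ᴴ) = tr(K_{2,i} ρ₂ˢˢ K_{2,j}ᴴ). Then the linear map T₁₂ on d₁×d₂ complex matrices defined by T₁₂(X) = V₁ᴴ (X ⊗ 1_k) V₂ admits an eigenvalue of modulus one: there exist c ∈ ℂ with |c| = 1 and a nonzero d₁×d₂ matrix F with T₁₂(F) = cF. -/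

import Mathlib

open Matrix Filter
open scoped Kronecker ComplexConjugate ComplexOrder

noncomputable section

namespace QMCPaper

/-- The `j`-th block (Kraus operator style) of a `(d₁·k)×d₂` matrix. -/
def blk {d₁ d₂ k : ℕ} (V : Matrix (Fin d₁ × Fin k) (Fin d₂) ℂ) (j : Fin k) :
    Matrix (Fin d₁) (Fin d₂) ℂ :=
  fun a b => V (a, j) b

/-- The Kraus operators of a QMC isometry. -/
def kraus {d k : ℕ} (V : Matrix (Fin d × Fin k) (Fin d) ℂ) (j : Fin k) :
    Matrix (Fin d) (Fin d) ℂ :=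
  blk V j

/-- The transition channel `T_V(X) = Vᴴ (X ⊗ 1_k) V = Σ_j K_jᴴ X K_j`. -/
def chan {d k : ℕ} (V : Matrix (Fin d × Fin k) (Fin d) ℂ)
    (X : Matrix (Fin d) (Fin d) ℂ) : Matrix (Fin d) (Fin d) ℂ :=
  ∑ j : Fin k, (kraus V j)ᴴ * X * kraus V j

/-- The predual channel `T_{V*}(ρ) = Σ_j K_j ρ K_jᴴ`. -/
def predual {d k : ℕ} (V : Matrix (Fin d × Fin k) (Fin d) ℂ)
    (ρ : Matrix (Fin d) (Fin d) ℂ) : Matrix (Fin d) (Fin d) ℂ :=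
  ∑ j : Fin k, kraus V j * ρ * (kraus V j)ᴴ

/-- A state: positive semidefinite matrix of trace one. -/
def IsState {d : ℕ} (ρ : Matrix (Fin d) (Fin d) ℂ) : Prop :=
  ρ.PosSemidef ∧ ρ.trace = 1

/-- `V` is an isometry defining an irreducible QMC with (unique, faithful) stationary
state `ρss`. -/
def IsIrreducible {d k : ℕ} (V : Matrix (Fin d × Fin k) (Fin d) ℂ)
    (ρss : Matrix (Fin d) (Fin d) ℂ) : Prop :=
  Vᴴ * V = 1 ∧ IsState ρss ∧ predual V ρss = ρss ∧ ρss.PosDef ∧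
    ∀ ρ, IsState ρ → predual V ρ = ρ → ρ = ρss

/-- For a word `i = (i_0, …, i_{n-1})`, the operator `K_i = K_{i_{n-1}} ⋯ K_{i_0}`. -/
def krausWord {d k : ℕ} (V : Matrix (Fin d × Fin k) (Fin d) ℂ) {n : ℕ}
    (i : Fin n → Fin k) : Matrix (Fin d) (Fin d) ℂ :=
  ((List.ofFn i).reverse.map (kraus V)).prod

/-- The output state at time `n` with initial system state `ρ`:
its `(i,j)` entry is `tr(K_i ρ K_jᴴ)`. -/
def outState {d k : ℕ} (V : Matrix (Fin d × Fin k) (Fin d) ℂ)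
    (ρ : Matrix (Fin d) (Fin d) ℂ) (n : ℕ) :
    Matrix (Fin n → Fin k) (Fin n → Fin k) ℂ :=
  fun i j => (krausWord V i * ρ * (krausWord V j)ᴴ).trace

/-- Output equivalence (with given initial states): equality of all output states. -/
def OutputEquiv {d₁ d₂ k : ℕ}
    (V₁ : Matrix (Fin d₁ × Fin k) (Fin d₁) ℂ) (ρ₁ : Matrix (Fin d₁) (Fin d₁) ℂ)
    (V₂ : Matrix (Fin d₂ × Fin k) (Fin d₂) ℂ) (ρ₂ : Matrix (Fin d₂) (Fin d₂) ℂ) : Prop :=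
  ∀ n : ℕ, 1 ≤ n → ∀ i j : Fin n → Fin k,
    (krausWord V₁ i * ρ₁ * (krausWord V₁ j)ᴴ).trace =
      (krausWord V₂ i * ρ₂ * (krausWord V₂ j)ᴴ).trace

/-- A (possibly rectangular) unitary matrix. -/
def IsUnitaryMat {d₁ d₂ : ℕ} (W : Matrix (Fin d₁) (Fin d₂) ℂ) : Prop :=
  Wᴴ * W = 1 ∧ W * Wᴴ = 1

end QMCPaper

namespace QMCPaper

/-- The map `T₁₂(X) = V₁ᴴ (X ⊗ 1_k) V₂` between two QMCs. -/
def chan12 {d₁ d₂ k : ℕ} (V₁ : Matrix (Fin d₁ × Fin k) (Fin d₁) ℂ)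
    (V₂ : Matrix (Fin d₂ × Fin k) (Fin d₂) ℂ)
    (X : Matrix (Fin d₁) (Fin d₂) ℂ) : Matrix (Fin d₁) (Fin d₂) ℂ :=
  V₁ᴴ * (X ⊗ₖ (1 : Matrix (Fin k) (Fin k) ℂ)) * V₂

section AuxiliaryLemmas

/-- The complex modulus, as an absolute value (removed from Mathlib). -/
def Complex.abs : AbsoluteValue ℂ ℝ where
  toFun z := ‖z‖
  map_mul' := norm_mul
  nonneg' := norm_nonneg
  eq_zero' _ := norm_eq_zero
  add_le' := norm_add_le

lemma Complex.norm_eq_abs (z : ℂ) : ‖z‖ = Complex.abs z := rfl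

lemma Complex.abs_conj (z : ℂ) : Complex.abs (conj z) = Complex.abs z := Complex.norm_conj z

lemma Complex.abs_ofReal (r : ℝ) : Complex.abs (r : ℂ) = |r| := by
  show ‖(r : ℂ)‖ = |r|
  rw [Complex.norm_real, Real.norm_eq_abs]

lemma Complex.normSq_eq_abs (z : ℂ) : Complex.normSq z = Complex.abs z ^ 2 :=
  Complex.normSq_eq_norm_sq z

lemma krausWord_zero {d k : ℕ} (V : Matrix (Fin d × Fin k) (Fin d) ℂ) (i : Fin 0 → Fin k) :
    krausWord V i = 1 := by
  simp [krausWord]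

lemma krausWord_cons {d k n : ℕ} (V : Matrix (Fin d × Fin k) (Fin d) ℂ)
    (j : Fin k) (i : Fin n → Fin k) :
    krausWord V (Fin.cons j i) = krausWord V i * kraus V j := by
  unfold krausWord
  rw [List.ofFn_succ]
  simp [List.map_append, List.prod_append]

lemma sum_words {k n : ℕ} {M : Type*} [AddCommMonoid M] (g : (Fin (n+1) → Fin k) → M) :
    ∑ i : Fin (n+1) → Fin k, g i = ∑ j : Fin k, ∑ i : Fin n → Fin k, g (Fin.cons j i) := by
  rw [← Equiv.sum_comp (Fin.consEquiv fun _ => Fin k) g, Fintype.sum_prod_type]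
  rfl

lemma sum_kraus_conjTranspose_mul {d k : ℕ} {V : Matrix (Fin d × Fin k) (Fin d) ℂ}
    (h : Vᴴ * V = 1) : ∑ j : Fin k, (kraus V j)ᴴ * kraus V j = 1 := by
  rw [← h]
  ext b c
  simp only [Matrix.sum_apply, Matrix.mul_apply, conjTranspose_apply, kraus, blk]
  rw [Fintype.sum_prod_type]
  exact Finset.sum_comm

lemma wordSum_isometry {d k : ℕ} {V : Matrix (Fin d × Fin k) (Fin d) ℂ}
    (h : Vᴴ * V = 1) (n : ℕ) :
    ∑ i : Fin n → Fin k, (krausWord V i)ᴴ * krausWord V i = 1 := by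
  induction n with
  | zero => simp [krausWord_zero]
  | succ n ih =>
    rw [sum_words]
    have : ∀ j : Fin k, ∑ i : Fin n → Fin k,
        (krausWord V (Fin.cons j i))ᴴ * krausWord V (Fin.cons j i)
        = (kraus V j)ᴴ * kraus V j := by
      intro j
      have : ∀ i : Fin n → Fin k,
          (krausWord V (Fin.cons j i))ᴴ * krausWord V (Fin.cons j i)
          = (kraus V j)ᴴ * ((krausWord V i)ᴴ * krausWord V i) * kraus V j := by
        intro i
        rw [krausWord_cons, conjTranspose_mul]
        noncomm_ring
      rw [Finset.sum_congr rfl fun i _ => this i]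
      rw [← Finset.sum_mul, ← Finset.mul_sum, ih, mul_one]
    rw [Finset.sum_congr rfl fun j _ => this j]
    exact sum_kraus_conjTranspose_mul h

lemma chan12_eq_sum {d₁ d₂ k : ℕ} (V₁ : Matrix (Fin d₁ × Fin k) (Fin d₁) ℂ)
    (V₂ : Matrix (Fin d₂ × Fin k) (Fin d₂) ℂ) (X : Matrix (Fin d₁) (Fin d₂) ℂ) :
    chan12 V₁ V₂ X = ∑ j : Fin k, (kraus V₁ j)ᴴ * X * kraus V₂ j := by
  ext b c
  have hL : ∀ p : Fin d₁ × Fin k,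
      ((X ⊗ₖ (1 : Matrix (Fin k) (Fin k) ℂ)) * V₂) p c
        = ∑ a' : Fin d₂, X p.1 a' * V₂ (a', p.2) c := by
    intro p
    rw [Matrix.mul_apply, Fintype.sum_prod_type]
    refine Finset.sum_congr rfl fun a' _ => ?_
    rw [Finset.sum_eq_single p.2]
    · simp
    · intro j' _ hj'
      simp [Matrix.one_apply_ne (Ne.symm hj')]
    · simp
  show (V₁ᴴ * (X ⊗ₖ (1 : Matrix (Fin k) (Fin k) ℂ)) * V₂) b c = _
  rw [Matrix.mul_assoc, Matrix.mul_apply]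
  simp only [conjTranspose_apply, hL]
  simp only [Matrix.sum_apply, Matrix.mul_apply, conjTranspose_apply, kraus, blk]
  rw [Fintype.sum_prod_type, Finset.sum_comm]
  refine Finset.sum_congr rfl fun j _ => ?_
  simp only [Finset.mul_sum, Finset.sum_mul]
  rw [Finset.sum_comm]
  refine Finset.sum_congr rfl fun a' _ => ?_
  refine Finset.sum_congr rfl fun a _ => ?_
  ring

/-- word-sum version of iterates of `chan12`. -/
def wordSum12 {d₁ d₂ k : ℕ} (V₁ : Matrix (Fin d₁ × Fin k) (Fin d₁) ℂ)
    (V₂ : Matrix (Fin d₂ × Fin k) (Fin d₂) ℂ) (n : ℕ)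
    (X : Matrix (Fin d₁) (Fin d₂) ℂ) : Matrix (Fin d₁) (Fin d₂) ℂ :=
  ∑ i : Fin n → Fin k, (krausWord V₁ i)ᴴ * X * krausWord V₂ i

lemma wordSum12_eigen {d₁ d₂ k : ℕ} {V₁ : Matrix (Fin d₁ × Fin k) (Fin d₁) ℂ}
    {V₂ : Matrix (Fin d₂ × Fin k) (Fin d₂) ℂ} {c : ℂ} {F : Matrix (Fin d₁) (Fin d₂) ℂ}
    (hF : chan12 V₁ V₂ F = c • F) (n : ℕ) :
    wordSum12 V₁ V₂ n F = c ^ n • F := by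
  induction n with
  | zero => simp [wordSum12, krausWord_zero]
  | succ n ih =>
    unfold wordSum12 at ih ⊢
    rw [sum_words (g := fun i => (krausWord V₁ i)ᴴ * F * krausWord V₂ i)]
    have : ∀ j : Fin k, ∑ i : Fin n → Fin k,
        (krausWord V₁ (Fin.cons j i))ᴴ * F * krausWord V₂ (Fin.cons j i)
        = (kraus V₁ j)ᴴ * (c ^ n • F) * kraus V₂ j := by
      intro j
      have h1 : ∀ i : Fin n → Fin k,
          (krausWord V₁ (Fin.cons j i))ᴴ * F * krausWord V₂ (Fin.cons j i)
          = (kraus V₁ j)ᴴ * ((krausWord V₁ i)ᴴ * F * krausWord V₂ i) * kraus V₂ j := by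
        intro i
        rw [krausWord_cons, krausWord_cons, conjTranspose_mul]
        simp only [Matrix.mul_assoc]
      rw [Finset.sum_congr rfl fun i _ => h1 i, ← Matrix.sum_mul, ← Matrix.mul_sum, ih]
    rw [Finset.sum_congr rfl fun j _ => this j]
    have : ∑ j : Fin k, (kraus V₁ j)ᴴ * (c ^ n • F) * kraus V₂ j
        = c ^ n • chan12 V₁ V₂ F := by
      rw [chan12_eq_sum, Finset.smul_sum]
      refine Finset.sum_congr rfl fun j _ => ?_
      rw [Matrix.mul_smul, Matrix.smul_mul]
    rw [this, hF, smul_smul, ← pow_succ]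


lemma triple_apply {d₁ d₂ e₁ e₂ : ℕ} (A : Matrix (Fin d₁) (Fin e₁) ℂ)
    (F : Matrix (Fin d₁) (Fin d₂) ℂ) (B : Matrix (Fin d₂) (Fin e₂) ℂ)
    (a : Fin e₁) (b : Fin e₂) :
    (Aᴴ * F * B) a b = ∑ p, ∑ q, conj (A p a) * F p q * B q b := by
  rw [Matrix.mul_apply]
  simp only [Matrix.mul_apply, conjTranspose_apply, Finset.sum_mul]
  exact Finset.sum_comm

/-- A crude entrywise bound constant for a matrix. -/
def entryBound {d₁ d₂ : ℕ} (F : Matrix (Fin d₁) (Fin d₂) ℂ) : ℝ :=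
  Real.sqrt (∑ p, ∑ q, Complex.abs (F p q) ^ 2) * Real.sqrt d₁

lemma entryBound_nonneg {d₁ d₂ : ℕ} (F : Matrix (Fin d₁) (Fin d₂) ℂ) :
    0 ≤ entryBound F :=
  mul_nonneg (Real.sqrt_nonneg _) (Real.sqrt_nonneg _)

lemma abs_bilin_le {d₁ d₂ : ℕ} (F : Matrix (Fin d₁) (Fin d₂) ℂ)
    (u : Fin d₁ → ℂ) (v : Fin d₂ → ℂ) :
    Complex.abs (∑ p, ∑ q, conj (u p) * F p q * v q)
      ≤ entryBound F * (Real.sqrt (∑ p, Complex.abs (u p) ^ 2)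
          * Real.sqrt (∑ q, Complex.abs (v q) ^ 2)) := by
  have habs : Complex.abs (∑ p, ∑ q, conj (u p) * F p q * v q)
      ≤ ∑ p, ∑ q, Complex.abs (u p) * Complex.abs (F p q) * Complex.abs (v q) := by
    refine (Complex.abs.sum_le _ _).trans ?_
    refine Finset.sum_le_sum fun p _ => ?_
    refine (Complex.abs.sum_le _ _).trans ?_
    refine Finset.sum_le_sum fun q _ => ?_
    rw [_root_.map_mul, _root_.map_mul, Complex.abs_conj]
  refine habs.trans ?_
  -- collapse into a single sum over pairs
  rw [← Finset.sum_product']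
  -- Cauchy-Schwarz
  set f : Fin d₁ × Fin d₂ → ℝ := fun pq => Complex.abs (u pq.1) * Complex.abs (F pq.1 pq.2)
  set g : Fin d₁ × Fin d₂ → ℝ := fun pq => Complex.abs (v pq.2)
  have hfg : ∑ pq ∈ (Finset.univ ×ˢ Finset.univ : Finset (Fin d₁ × Fin d₂)),
      Complex.abs (u pq.1) * Complex.abs (F pq.1 pq.2) * Complex.abs (v pq.2)
      = ∑ pq ∈ (Finset.univ ×ˢ Finset.univ : Finset (Fin d₁ × Fin d₂)), f pq * g pq := rfl
  rw [hfg]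
  have hCS := Finset.sum_mul_sq_le_sq_mul_sq (Finset.univ ×ˢ Finset.univ) f g
  have hf2 : ∑ pq ∈ (Finset.univ ×ˢ Finset.univ : Finset (Fin d₁ × Fin d₂)), f pq ^ 2
      ≤ (∑ p, ∑ q, Complex.abs (F p q) ^ 2) * (∑ p, Complex.abs (u p) ^ 2) := by
    rw [Finset.sum_product]
    have : ∀ p : Fin d₁, ∑ q, f (p, q) ^ 2
        ≤ (∑ p', ∑ q, Complex.abs (F p' q) ^ 2) * Complex.abs (u p) ^ 2 := by
      intro p
      have h1 : ∑ q, f (p, q) ^ 2 = (∑ q, Complex.abs (F p q) ^ 2) * Complex.abs (u p) ^ 2 := by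
        rw [Finset.sum_mul]
        refine Finset.sum_congr rfl fun q _ => ?_
        simp only [f]
        ring
      rw [h1]
      refine mul_le_mul_of_nonneg_right ?_ (sq_nonneg _)
      exact Finset.single_le_sum (f := fun p' => ∑ q, Complex.abs (F p' q) ^ 2)
        (fun p' _ => Finset.sum_nonneg fun q _ => sq_nonneg _) (Finset.mem_univ p)
    refine (Finset.sum_le_sum fun p _ => this p).trans ?_
    rw [← Finset.mul_sum]
  have hg2 : ∑ pq ∈ (Finset.univ ×ˢ Finset.univ : Finset (Fin d₁ × Fin d₂)), g pq ^ 2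
      = (d₁ : ℝ) * ∑ q, Complex.abs (v q) ^ 2 := by
    rw [Finset.sum_product]
    simp [g, Finset.sum_const]
  have hnn : 0 ≤ ∑ pq ∈ (Finset.univ ×ˢ Finset.univ : Finset (Fin d₁ × Fin d₂)), f pq * g pq :=
    Finset.sum_nonneg fun pq _ => mul_nonneg
      (mul_nonneg (Complex.abs.nonneg _) (Complex.abs.nonneg _)) (Complex.abs.nonneg _)
  have key : (∑ pq ∈ (Finset.univ ×ˢ Finset.univ : Finset (Fin d₁ × Fin d₂)), f pq * g pq) ^ 2
      ≤ ((∑ p, ∑ q, Complex.abs (F p q) ^ 2) * (∑ p, Complex.abs (u p) ^ 2))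
        * ((d₁ : ℝ) * ∑ q, Complex.abs (v q) ^ 2) := by
    refine hCS.trans ?_
    rw [hg2]
    refine mul_le_mul_of_nonneg_right hf2 ?_
    positivity
  calc ∑ pq ∈ (Finset.univ ×ˢ Finset.univ : Finset (Fin d₁ × Fin d₂)), f pq * g pq
      = Real.sqrt ((∑ pq ∈ (Finset.univ ×ˢ Finset.univ : Finset (Fin d₁ × Fin d₂)),
          f pq * g pq) ^ 2) := (Real.sqrt_sq hnn).symm
    _ ≤ Real.sqrt (((∑ p, ∑ q, Complex.abs (F p q) ^ 2) * (∑ p, Complex.abs (u p) ^ 2))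
        * ((d₁ : ℝ) * ∑ q, Complex.abs (v q) ^ 2)) := Real.sqrt_le_sqrt key
    _ = entryBound F * (Real.sqrt (∑ p, Complex.abs (u p) ^ 2)
        * Real.sqrt (∑ q, Complex.abs (v q) ^ 2)) := by
        rw [Real.sqrt_mul (by positivity), Real.sqrt_mul (by positivity),
          Real.sqrt_mul (by positivity)]
        unfold entryBound
        ring

lemma diag_isometry {d k : ℕ} {V : Matrix (Fin d × Fin k) (Fin d) ℂ}
    (h : Vᴴ * V = 1) (n : ℕ) (a : Fin d) :
    ∑ i : Fin n → Fin k, ∑ p, Complex.abs ((krausWord V i) p a) ^ 2 = 1 := by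
  have h0 := wordSum_isometry h n
  have h1 : (∑ i : Fin n → Fin k, (krausWord V i)ᴴ * krausWord V i) a a = 1 := by
    rw [h0]; simp
  rw [Matrix.sum_apply] at h1
  have h2 : ∀ i : Fin n → Fin k, ((krausWord V i)ᴴ * krausWord V i) a a
      = ((∑ p, Complex.abs ((krausWord V i) p a) ^ 2 : ℝ) : ℂ) := by
    intro i
    rw [Matrix.mul_apply]
    push_cast
    refine Finset.sum_congr rfl fun p _ => ?_
    rw [conjTranspose_apply,
      show (star (krausWord V i p a) : ℂ) = conj (krausWord V i p a) from rfl,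
      mul_comm, Complex.mul_conj, Complex.normSq_eq_abs]
    push_cast
    ring
  rw [Finset.sum_congr rfl fun i _ => h2 i] at h1
  exact_mod_cast h1

lemma entry_bound_wordSum12 {d₁ d₂ k : ℕ} {V₁ : Matrix (Fin d₁ × Fin k) (Fin d₁) ℂ}
    {V₂ : Matrix (Fin d₂ × Fin k) (Fin d₂) ℂ}
    (h₁ : V₁ᴴ * V₁ = 1) (h₂ : V₂ᴴ * V₂ = 1) (F : Matrix (Fin d₁) (Fin d₂) ℂ)
    (n : ℕ) (a : Fin d₁) (b : Fin d₂) :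
    Complex.abs ((wordSum12 V₁ V₂ n F) a b) ≤ entryBound F := by
  set C := entryBound F with hC
  have hCnn := entryBound_nonneg F
  set u : (Fin n → Fin k) → ℝ :=
    fun i => Real.sqrt (∑ p, Complex.abs ((krausWord V₁ i) p a) ^ 2) with hu
  set v : (Fin n → Fin k) → ℝ :=
    fun i => Real.sqrt (∑ q, Complex.abs ((krausWord V₂ i) q b) ^ 2) with hv
  have step1 : Complex.abs ((wordSum12 V₁ V₂ n F) a b)
      ≤ ∑ i : Fin n → Fin k, C * (u i * v i) := by
    unfold wordSum12
    rw [Matrix.sum_apply]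
    refine (Complex.abs.sum_le _ _).trans ?_
    refine Finset.sum_le_sum fun i _ => ?_
    rw [triple_apply]
    exact abs_bilin_le F _ _
  refine step1.trans ?_
  rw [← Finset.mul_sum]
  have step2 : ∑ i : Fin n → Fin k, u i * v i ≤ 1 := by
    have hCS := Finset.sum_mul_sq_le_sq_mul_sq Finset.univ u v
    have hu2 : ∑ i : Fin n → Fin k, u i ^ 2 = 1 := by
      have : ∀ i : Fin n → Fin k, u i ^ 2 = ∑ p, Complex.abs ((krausWord V₁ i) p a) ^ 2 := by
        intro i
        rw [hu]
        exact Real.sq_sqrt (Finset.sum_nonneg fun p _ => sq_nonneg _)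
      rw [Finset.sum_congr rfl fun i _ => this i]
      exact diag_isometry h₁ n a
    have hv2 : ∑ i : Fin n → Fin k, v i ^ 2 = 1 := by
      have : ∀ i : Fin n → Fin k, v i ^ 2 = ∑ q, Complex.abs ((krausWord V₂ i) q b) ^ 2 := by
        intro i
        rw [hv]
        exact Real.sq_sqrt (Finset.sum_nonneg fun q _ => sq_nonneg _)
      rw [Finset.sum_congr rfl fun i _ => this i]
      exact diag_isometry h₂ n b
    have hnn : 0 ≤ ∑ i : Fin n → Fin k, u i * v i :=
      Finset.sum_nonneg fun i _ => mul_nonneg (Real.sqrt_nonneg _) (Real.sqrt_nonneg _)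
    nlinarith [hCS, hu2, hv2, hnn]
  calc C * ∑ i : Fin n → Fin k, u i * v i ≤ C * 1 := by
        exact mul_le_mul_of_nonneg_left step2 hCnn
    _ = C := mul_one C

lemma eigenvalue_abs_le_one {d₁ d₂ k : ℕ} {V₁ : Matrix (Fin d₁ × Fin k) (Fin d₁) ℂ}
    {V₂ : Matrix (Fin d₂ × Fin k) (Fin d₂) ℂ}
    (h₁ : V₁ᴴ * V₁ = 1) (h₂ : V₂ᴴ * V₂ = 1) {c : ℂ} {F : Matrix (Fin d₁) (Fin d₂) ℂ}
    (hF : F ≠ 0) (he : chan12 V₁ V₂ F = c • F) : Complex.abs c ≤ 1 := by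
  obtain ⟨a, b, hab⟩ : ∃ a b, F a b ≠ 0 := by
    by_contra hcon
    push_neg at hcon
    exact hF (by ext a b; simpa using hcon a b)
  have habpos : 0 < Complex.abs (F a b) := by
    simpa [AbsoluteValue.pos_iff] using hab
  have key : ∀ n : ℕ, Complex.abs c ^ n * Complex.abs (F a b) ≤ entryBound F := by
    intro n
    have := entry_bound_wordSum12 h₁ h₂ F n a b
    rw [wordSum12_eigen he n] at this
    simpa [Matrix.smul_apply, _root_.map_mul, map_pow, smul_eq_mul] using this
  by_contra hc
  push_neg at hc
  obtain ⟨n, hn⟩ := pow_unbounded_of_one_lt (entryBound F / Complex.abs (F a b)) hc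
  have := key n
  rw [div_lt_iff₀ habpos] at hn
  linarith


lemma trace_mul_conjTranspose_self {m m' : Type*} [Fintype m] [Fintype m']
    (M : Matrix m m' ℂ) :
    (M * Mᴴ).trace = ((∑ p, ∑ q, Complex.abs (M p q) ^ 2 : ℝ) : ℂ) := by
  unfold Matrix.trace
  push_cast
  simp only [Matrix.diag, Matrix.mul_apply, conjTranspose_apply]
  refine Finset.sum_congr rfl fun p _ => Finset.sum_congr rfl fun q _ => ?_
  rw [show (star (M p q) : ℂ) = conj (M p q) from rfl, Complex.mul_conj,
    Complex.normSq_eq_abs]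
  push_cast
  ring

lemma lower_bound {d k : ℕ} {V : Matrix (Fin d × Fin k) (Fin d) ℂ}
    (h : Vᴴ * V = 1) {ρ : Matrix (Fin d) (Fin d) ℂ}
    (hρ : ρ.PosSemidef) (htr : ρ.trace = 1) (n : ℕ) :
    (1 : ℝ) ≤ ((d * d : ℕ) : ℝ) * ∑ i : Fin n → Fin k, ∑ j : Fin n → Fin k,
      Complex.abs ((krausWord V i * ρ * (krausWord V j)ᴴ).trace) ^ 2 := by
  classical
  obtain ⟨r, hrr, hrH⟩ : ∃ r : Matrix (Fin d) (Fin d) ℂ, r * r = ρ ∧ rᴴ = r := by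
    open scoped MatrixOrder in
    exact ⟨CFC.sqrt ρ, CFC.sqrt_mul_sqrt_self ρ hρ.nonneg, (CFC.sqrt_nonneg ρ).posSemidef.1⟩
  set X : Matrix (Fin d × Fin d) (Fin n → Fin k) ℂ :=
    Matrix.of (fun p i => (krausWord V i * r) p.1 p.2) with hXdef
  have hG : ∀ i j : Fin n → Fin k,
      (krausWord V i * ρ * (krausWord V j)ᴴ).trace = (Xᴴ * X) j i := by
    intro i j
    have hfact : krausWord V i * ρ * (krausWord V j)ᴴ
        = (krausWord V i * r) * (krausWord V j * r)ᴴ := by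
      rw [conjTranspose_mul, hrH, ← hrr]
      simp only [Matrix.mul_assoc]
    rw [hfact]
    unfold Matrix.trace
    rw [Matrix.mul_apply]
    simp only [Matrix.diag, Matrix.mul_apply, conjTranspose_apply, Matrix.of_apply]
    rw [Fintype.sum_prod_type]
    refine Finset.sum_congr rfl fun u _ => Finset.sum_congr rfl fun v _ => ?_
    simp only [X, Matrix.of_apply]
    exact mul_comm _ _
  have htr1 : (Xᴴ * X).trace = 1 := by
    unfold Matrix.trace
    simp only [Matrix.diag]
    rw [Finset.sum_congr rfl fun i (_ : i ∈ Finset.univ) => (hG i i).symm]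
    have h2 : ∀ i : Fin n → Fin k,
        (krausWord V i * ρ * (krausWord V i)ᴴ).trace
        = (((krausWord V i)ᴴ * krausWord V i) * ρ).trace := by
      intro i
      rw [Matrix.trace_mul_cycle]
    rw [Finset.sum_congr rfl fun i _ => h2 i, ← Matrix.trace_sum, ← Matrix.sum_mul,
      wordSum_isometry h n, Matrix.one_mul, htr]
  have hH1 : (X * Xᴴ).trace = 1 := by
    rw [Matrix.trace_mul_comm]
    exact htr1
  set y : Fin d × Fin d → ℝ := fun p => ∑ i, Complex.abs (X p i) ^ 2 with hydef
  have hdiag : ∀ p, (X * Xᴴ) p p = ((y p : ℝ) : ℂ) := by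
    intro p
    show _ = ((∑ i, Complex.abs (X p i) ^ 2 : ℝ) : ℂ)
    rw [Matrix.mul_apply]
    push_cast
    refine Finset.sum_congr rfl fun i _ => ?_
    rw [conjTranspose_apply, show (star (X p i) : ℂ) = conj (X p i) from rfl,
      Complex.mul_conj, Complex.normSq_eq_abs]
    push_cast
    ring
  have hynn : ∀ p, 0 ≤ y p := fun p => Finset.sum_nonneg fun i _ => sq_nonneg _
  have hysum : ∑ p, y p = 1 := by
    have hc : (X * Xᴴ).trace = ((∑ p, y p : ℝ) : ℂ) := by
      unfold Matrix.trace
      simp only [Matrix.diag]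
      rw [Finset.sum_congr rfl fun p (_ : p ∈ Finset.univ) => hdiag p]
      push_cast
      rfl
    rw [hH1] at hc
    exact_mod_cast hc.symm
  -- identify the two entrywise square sums via traces
  have e1 : ∑ i : Fin n → Fin k, ∑ j : Fin n → Fin k,
      Complex.abs ((krausWord V i * ρ * (krausWord V j)ᴴ).trace) ^ 2
      = ∑ p, ∑ q, Complex.abs ((X * Xᴴ) p q) ^ 2 := by
    have c1 : ((∑ i : Fin n → Fin k, ∑ j : Fin n → Fin k,
        Complex.abs ((krausWord V i * ρ * (krausWord V j)ᴴ).trace) ^ 2 : ℝ) : ℂ)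
        = ((Xᴴ * X) * (Xᴴ * X)ᴴ).trace := by
      rw [trace_mul_conjTranspose_self]
      norm_cast
      rw [Finset.sum_comm]
      refine Finset.sum_congr rfl fun j _ => Finset.sum_congr rfl fun i _ => ?_
      rw [hG i j]
    have c2 : ((∑ p, ∑ q, Complex.abs ((X * Xᴴ) p q) ^ 2 : ℝ) : ℂ)
        = ((X * Xᴴ) * (X * Xᴴ)ᴴ).trace := (trace_mul_conjTranspose_self _).symm
    have c3 : ((Xᴴ * X) * (Xᴴ * X)ᴴ).trace = ((X * Xᴴ) * (X * Xᴴ)ᴴ).trace := by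
      rw [conjTranspose_mul, conjTranspose_conjTranspose,
        conjTranspose_mul, conjTranspose_conjTranspose]
      simp only [← Matrix.mul_assoc]
      rw [Matrix.trace_mul_comm]
      simp only [← Matrix.mul_assoc]
    have := c1.trans (c3.trans c2.symm)
    exact_mod_cast this
  rw [e1]
  -- keep only diagonal entries
  have e2 : ∑ p, (y p) ^ 2 ≤ ∑ p, ∑ q, Complex.abs ((X * Xᴴ) p q) ^ 2 := by
    refine Finset.sum_le_sum fun p _ => ?_
    have : Complex.abs ((X * Xᴴ) p p) ^ 2 = (y p) ^ 2 := by
      rw [hdiag p, Complex.abs_ofReal, abs_of_nonneg (hynn p)]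
    rw [← this]
    exact Finset.single_le_sum (f := fun q => Complex.abs ((X * Xᴴ) p q) ^ 2)
      (fun q _ => sq_nonneg _) (Finset.mem_univ p)
  -- Cauchy-Schwarz with the constant function 1
  have e3 : (1 : ℝ) ≤ ((d * d : ℕ) : ℝ) * ∑ p, (y p) ^ 2 := by
    have hCS := Finset.sum_mul_sq_le_sq_mul_sq Finset.univ y (fun _ => (1 : ℝ))
    simp only [mul_one, one_pow, Finset.sum_const, Finset.card_univ, nsmul_eq_mul] at hCS
    rw [hysum, one_pow] at hCS
    have hcard : (Fintype.card (Fin d × Fin d) : ℝ) = ((d * d : ℕ) : ℝ) := by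
      simp
    rw [hcard] at hCS
    linarith [hCS]
  refine e3.trans ?_
  have : (0 : ℝ) ≤ ((d * d : ℕ) : ℝ) := by positivity
  nlinarith [e2, this]


/-- The transfer matrix between the two chains. -/
def transferL {d₁ d₂ k : ℕ} (V₁ : Matrix (Fin d₁ × Fin k) (Fin d₁) ℂ)
    (V₂ : Matrix (Fin d₂ × Fin k) (Fin d₂) ℂ) :
    Matrix (Fin d₁ × Fin d₂) (Fin d₁ × Fin d₂) ℂ :=
  ∑ j : Fin k, (kraus V₁ j) ⊗ₖ ((kraus V₂ j).map (starRingEnd ℂ))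

lemma trace_map_conj {m : Type*} [Fintype m] (M : Matrix m m ℂ) :
    (M.map (starRingEnd ℂ)).trace = conj M.trace := by
  simp [Matrix.trace, Matrix.diag, Matrix.map_apply, map_sum]

lemma conjTranspose_kronecker_map_conj {m₁ n₁ m₂ n₂ : Type*}
    (A : Matrix m₁ n₁ ℂ) (B : Matrix m₂ n₂ ℂ) :
    (A ⊗ₖ (B.map (starRingEnd ℂ)))ᴴ = Aᴴ ⊗ₖ (Bᴴ.map (starRingEnd ℂ)) := by
  ext p q
  simp [conjTranspose_apply, kroneckerMap_apply, Matrix.map_apply, mul_comm]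

lemma transferL_pow {d₁ d₂ k : ℕ} (V₁ : Matrix (Fin d₁ × Fin k) (Fin d₁) ℂ)
    (V₂ : Matrix (Fin d₂ × Fin k) (Fin d₂) ℂ) (n : ℕ) :
    (transferL V₁ V₂) ^ n = ∑ i : Fin n → Fin k,
      (krausWord V₁ i) ⊗ₖ ((krausWord V₂ i).map (starRingEnd ℂ)) := by
  induction n with
  | zero =>
    rw [pow_zero]
    have : ∀ i : Fin 0 → Fin k,
        (krausWord V₁ i) ⊗ₖ ((krausWord V₂ i).map (starRingEnd ℂ))
        = (1 : Matrix (Fin d₁ × Fin d₂) (Fin d₁ × Fin d₂) ℂ) := by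
      intro i
      rw [krausWord_zero, krausWord_zero, Matrix.map_one _ (map_zero _) (map_one _),
        Matrix.one_kronecker_one]
    rw [Finset.sum_congr rfl fun i _ => this i]
    simp
  | succ n ih =>
    rw [pow_succ, ih]
    rw [sum_words (g := fun i => (krausWord V₁ i) ⊗ₖ ((krausWord V₂ i).map (starRingEnd ℂ)))]
    have : ∀ j : Fin k, ∀ i : Fin n → Fin k,
        (krausWord V₁ (Fin.cons j i)) ⊗ₖ ((krausWord V₂ (Fin.cons j i)).map (starRingEnd ℂ))
        = ((krausWord V₁ i) ⊗ₖ ((krausWord V₂ i).map (starRingEnd ℂ)))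
          * ((kraus V₁ j) ⊗ₖ ((kraus V₂ j).map (starRingEnd ℂ))) := by
      intro j i
      rw [krausWord_cons, krausWord_cons, Matrix.map_mul, Matrix.mul_kronecker_mul]
    rw [Finset.sum_congr rfl fun j _ =>
      Finset.sum_congr rfl fun i _ => this j i]
    rw [Finset.sum_comm]
    have hsplit : ∀ y : Fin n → Fin k,
        ∑ x : Fin k, (krausWord V₁ y) ⊗ₖ ((krausWord V₂ y).map (starRingEnd ℂ))
          * ((kraus V₁ x) ⊗ₖ ((kraus V₂ x).map (starRingEnd ℂ)))
        = (krausWord V₁ y) ⊗ₖ ((krausWord V₂ y).map (starRingEnd ℂ))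
          * ∑ x : Fin k, (kraus V₁ x) ⊗ₖ ((kraus V₂ x).map (starRingEnd ℂ)) :=
      fun y => (Finset.mul_sum _ _ _).symm
    rw [Finset.sum_congr rfl fun y _ => hsplit y, ← Finset.sum_mul, transferL]

/-- The key identity: the output-overlap sum equals a trace of transfer-matrix powers. -/
lemma phi_eq_trace {d₁ d₂ k : ℕ} (V₁ : Matrix (Fin d₁ × Fin k) (Fin d₁) ℂ)
    (V₂ : Matrix (Fin d₂ × Fin k) (Fin d₂) ℂ)
    (ρ₁ : Matrix (Fin d₁) (Fin d₁) ℂ) (ρ₂ : Matrix (Fin d₂) (Fin d₂) ℂ) (n : ℕ) :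
    ∑ i : Fin n → Fin k, ∑ j : Fin n → Fin k,
      (krausWord V₁ i * ρ₁ * (krausWord V₁ j)ᴴ).trace
        * conj ((krausWord V₂ i * ρ₂ * (krausWord V₂ j)ᴴ).trace)
    = (((transferL V₁ V₂) ^ n) * (ρ₁ ⊗ₖ (ρ₂.map (starRingEnd ℂ)))
        * (((transferL V₁ V₂) ^ n))ᴴ).trace := by
  rw [transferL_pow]
  rw [Matrix.sum_mul, Matrix.sum_mul, Matrix.trace_sum]
  refine Finset.sum_congr rfl fun i _ => ?_
  rw [conjTranspose_sum]
  rw [Matrix.mul_sum, Matrix.trace_sum]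
  refine Finset.sum_congr rfl fun j _ => ?_
  have expand : ((krausWord V₁ i) ⊗ₖ ((krausWord V₂ i).map (starRingEnd ℂ)))
      * (ρ₁ ⊗ₖ (ρ₂.map (starRingEnd ℂ)))
      * ((krausWord V₁ j) ⊗ₖ ((krausWord V₂ j).map (starRingEnd ℂ)))ᴴ
      = (krausWord V₁ i * ρ₁ * (krausWord V₁ j)ᴴ)
        ⊗ₖ ((krausWord V₂ i * ρ₂ * (krausWord V₂ j)ᴴ).map (starRingEnd ℂ)) := by
    rw [conjTranspose_kronecker_map_conj, Matrix.map_mul, Matrix.map_mul,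
      Matrix.mul_kronecker_mul, Matrix.mul_kronecker_mul]
  rw [expand, Matrix.trace_kronecker, trace_map_conj]

/-- Crude numeric bound for the trace expression. -/
lemma abs_trace_le {P Q : Type*} [Fintype P] [Fintype Q]
    (A : Matrix P Q ℂ) (Pm : Matrix Q Q ℂ) {B : ℝ}
    (hB : ∀ p q, Complex.abs (A p q) ≤ B) (hB0 : 0 ≤ B) :
    Complex.abs ((A * Pm * Aᴴ).trace)
      ≤ (Fintype.card P : ℝ) * (∑ q, ∑ q', Complex.abs (Pm q q')) * B ^ 2 := by
  have happ : ∀ p, (A * Pm * Aᴴ) p p = ∑ q, ∑ q', A p q * Pm q q' * conj (A p q') := by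
    intro p
    rw [Matrix.mul_apply]
    simp only [Matrix.mul_apply, conjTranspose_apply, Finset.sum_mul]
    rw [Finset.sum_comm]
    rfl
  unfold Matrix.trace
  simp only [Matrix.diag]
  rw [Finset.sum_congr rfl fun p (_ : p ∈ Finset.univ) => happ p]
  refine (Complex.abs.sum_le _ _).trans ?_
  have hper : ∀ p, Complex.abs (∑ q, ∑ q', A p q * Pm q q' * conj (A p q'))
      ≤ (∑ q, ∑ q', Complex.abs (Pm q q')) * B ^ 2 := by
    intro p
    refine (Complex.abs.sum_le _ _).trans ?_
    rw [Finset.sum_mul]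
    refine Finset.sum_le_sum fun q _ => ?_
    refine (Complex.abs.sum_le _ _).trans ?_
    rw [Finset.sum_mul]
    refine Finset.sum_le_sum fun q' _ => ?_
    rw [_root_.map_mul, _root_.map_mul, Complex.abs_conj]
    calc Complex.abs (A p q) * Complex.abs (Pm q q') * Complex.abs (A p q')
        ≤ B * Complex.abs (Pm q q') * B := by
          refine mul_le_mul (mul_le_mul_of_nonneg_right (hB p q) (Complex.abs.nonneg _))
            (hB p q') (Complex.abs.nonneg _) ?_
          positivity
      _ = Complex.abs (Pm q q') * B ^ 2 := by ring
  refine (Finset.sum_le_sum fun p _ => hper p).trans ?_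
  rw [Finset.sum_const, Finset.card_univ, nsmul_eq_mul]
  ring_nf
  exact le_of_eq rfl


section Spectral

attribute [local instance] Matrix.frobeniusNormedAddCommGroup Matrix.frobeniusNormedSpace
  Matrix.frobeniusNormedRing Matrix.frobeniusNormedAlgebra

variable {ι : Type*} [Fintype ι] [DecidableEq ι]

set_option linter.unusedSectionVars false in
lemma frob_entry_le (A : Matrix ι ι ℂ) (p q : ι) : Complex.abs (A p q) ≤ ‖A‖ := by
  rw [Matrix.frobenius_norm_def]
  have hterm : ∀ (i : ι) (j : ι), (0:ℝ) ≤ ‖A i j‖ ^ (2:ℝ) :=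
    fun i j => Real.rpow_nonneg (norm_nonneg _) _
  have hle : ‖A p q‖ ^ (2:ℝ) ≤ ∑ i, ∑ j, ‖A i j‖ ^ (2:ℝ) := by
    calc ‖A p q‖ ^ (2:ℝ) ≤ ∑ j, ‖A p j‖ ^ (2:ℝ) :=
          Finset.single_le_sum (f := fun j => ‖A p j‖ ^ (2:ℝ))
            (fun j _ => hterm p j) (Finset.mem_univ q)
      _ ≤ ∑ i, ∑ j, ‖A i j‖ ^ (2:ℝ) :=
          Finset.single_le_sum (f := fun i => ∑ j, ‖A i j‖ ^ (2:ℝ))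
            (fun i _ => Finset.sum_nonneg fun j _ => hterm i j) (Finset.mem_univ p)
  have hident : ‖A p q‖ = (‖A p q‖ ^ (2:ℝ)) ^ (1/2 : ℝ) := by
    rw [← Real.rpow_mul (norm_nonneg _)]
    norm_num
  rw [show Complex.abs (A p q) = ‖A p q‖ from (Complex.norm_eq_abs _).symm, hident]
  exact Real.rpow_le_rpow (hterm p q) hle (by norm_num)

set_option linter.unusedSectionVars false in
lemma exists_small_pow [Nonempty ι] (L : Matrix ι ι ℂ)
    (hspec : ∀ c ∈ spectrum ℂ L, Complex.abs c < 1) {ε : ℝ} (hε : 0 < ε) :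
    ∃ n, 1 ≤ n ∧ ∀ p q, Complex.abs ((L ^ n) p q) < ε := by
  haveI : CompleteSpace (Matrix ι ι ℂ) := FiniteDimensional.complete ℂ _
  obtain ⟨c₀, hc₀, hmax⟩ := (spectrum.isCompact (𝕜 := ℂ) L).exists_isMaxOn
    (spectrum.nonempty L) continuous_norm.continuousOn
  have hrad : spectralRadius ℂ L < 1 := by
    have h1 : spectralRadius ℂ L ≤ (‖c₀‖₊ : ENNReal) := by
      rw [spectralRadius]
      exact iSup₂_le fun c hc => by
        exact_mod_cast ENNReal.coe_le_coe.2 (by exact_mod_cast hmax hc)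
    refine h1.trans_lt ?_
    have h2 : ‖c₀‖ < 1 := by
      rw [Complex.norm_eq_abs]
      exact hspec c₀ hc₀
    exact_mod_cast h2
  obtain ⟨qq, hq1, hq2⟩ := exists_between hrad
  have hev1 : ∀ᶠ n : ℕ in atTop, (‖L ^ n‖₊ : ENNReal) ^ (1/(n:ℝ)) < qq :=
    (spectrum.pow_nnnorm_pow_one_div_tendsto_nhds_spectralRadius L).eventually_lt_const hq1
  have hev2 : ∀ᶠ n : ℕ in atTop, (qq ^ n) < ENNReal.ofReal ε :=
    (ENNReal.tendsto_pow_atTop_nhds_zero_of_lt_one hq2).eventually_lt_const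
      (ENNReal.ofReal_pos.mpr hε)
  have hev3 : ∀ᶠ n : ℕ in atTop, 1 ≤ n := eventually_ge_atTop 1
  obtain ⟨n, hn1, hn2, hn3⟩ := (hev1.and (hev2.and hev3)).exists
  refine ⟨n, hn3, ?_⟩
  have hn0 : (n:ℝ) ≠ 0 := by
    have : (1:ℝ) ≤ (n:ℝ) := by exact_mod_cast hn3
    linarith
  have hpow : (‖L ^ n‖₊ : ENNReal) < qq ^ n := by
    calc (‖L ^ n‖₊ : ENNReal) = (((‖L ^ n‖₊ : ENNReal)) ^ (1/(n:ℝ))) ^ (n:ℝ) := by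
          rw [← ENNReal.rpow_mul, one_div_mul_cancel hn0, ENNReal.rpow_one]
      _ < qq ^ (n:ℝ) := ENNReal.rpow_lt_rpow hn1 (by positivity)
      _ = qq ^ n := ENNReal.rpow_natCast qq n
  have hfin : ‖L ^ n‖ < ε := by
    have h3 := hpow.trans hn2
    rw [ENNReal.ofReal] at h3
    have h4 : ‖L ^ n‖₊ < ε.toNNReal := by exact_mod_cast h3
    have h5 : (‖L ^ n‖₊ : ℝ) < (ε.toNNReal : ℝ) := NNReal.coe_lt_coe.2 h4
    rwa [Real.coe_toNNReal _ hε.le] at h5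
  intro p q'
  exact (frob_entry_le _ p q').trans_lt hfin

end Spectral

lemma spectrum_conj_eigen {ι : Type*} [Fintype ι] [DecidableEq ι]
    (L : Matrix ι ι ℂ) (c : ℂ) (hc : c ∈ spectrum ℂ L) :
    ∃ w : ι → ℂ, w ≠ 0 ∧ Lᴴ *ᵥ w = (conj c) • w := by
  rw [spectrum.mem_iff] at hc
  have hdet : (algebraMap ℂ (Matrix ι ι ℂ) c - L).det = 0 := by
    by_contra h
    exact hc ((Matrix.isUnit_iff_isUnit_det _).mpr (Ne.isUnit h))
  have hdet2 : ((algebraMap ℂ (Matrix ι ι ℂ) c - L)ᴴ).det = 0 := by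
    rw [Matrix.det_conjTranspose, hdet, star_zero]
  obtain ⟨w, hw0, hw⟩ := (Matrix.exists_mulVec_eq_zero_iff).mpr hdet2
  refine ⟨w, hw0, ?_⟩
  have hform : (algebraMap ℂ (Matrix ι ι ℂ) c - L)ᴴ = (conj c) • (1 : Matrix ι ι ℂ) - Lᴴ := by
    rw [conjTranspose_sub]
    congr 1
    rw [Algebra.algebraMap_eq_smul_one, Matrix.conjTranspose_smul, Matrix.conjTranspose_one]
    rfl
  rw [hform, Matrix.sub_mulVec, Matrix.smul_mulVec, Matrix.one_mulVec] at hw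
  have := sub_eq_zero.mp hw
  exact this.symm


lemma transferL_conjT_mulVec {d₁ d₂ k : ℕ} (V₁ : Matrix (Fin d₁ × Fin k) (Fin d₁) ℂ)
    (V₂ : Matrix (Fin d₂ × Fin k) (Fin d₂) ℂ) (w : Fin d₁ × Fin d₂ → ℂ)
    (a : Fin d₁) (b : Fin d₂) :
    ((transferL V₁ V₂)ᴴ *ᵥ w) (a, b)
      = (chan12 V₁ V₂ (Matrix.of fun a' b' => w (a', b'))) a b := by
  rw [chan12_eq_sum, Matrix.sum_apply]
  rw [Finset.sum_congr rfl fun j (_ : j ∈ Finset.univ) =>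
    triple_apply (kraus V₁ j) (Matrix.of fun a' b' => w (a', b')) (kraus V₂ j) a b]
  calc ((transferL V₁ V₂)ᴴ *ᵥ w) (a, b)
      = ∑ q : Fin d₁ × Fin d₂, conj ((transferL V₁ V₂) q (a, b)) * w q := by
        simp [Matrix.mulVec, dotProduct, conjTranspose_apply, RCLike.star_def]
    _ = ∑ q : Fin d₁ × Fin d₂, ∑ j : Fin k,
          conj (kraus V₁ j q.1 a) * kraus V₂ j q.2 b * w q := by
        refine Finset.sum_congr rfl fun q _ => ?_
        rw [transferL, Matrix.sum_apply, map_sum, Finset.sum_mul]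
        refine Finset.sum_congr rfl fun j _ => ?_
        simp only [Matrix.kroneckerMap_apply, Matrix.map_apply, _root_.map_mul,
          Complex.conj_conj]
    _ = ∑ j : Fin k, ∑ q : Fin d₁ × Fin d₂,
          conj (kraus V₁ j q.1 a) * kraus V₂ j q.2 b * w q := Finset.sum_comm
    _ = ∑ j : Fin k, ∑ p : Fin d₁, ∑ r : Fin d₂,
          conj (kraus V₁ j p a) * (Matrix.of fun a' b' => w (a', b')) p r
            * kraus V₂ j r b := by
        refine Finset.sum_congr rfl fun j _ => ?_
        rw [Fintype.sum_prod_type]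
        refine Finset.sum_congr rfl fun a' _ => Finset.sum_congr rfl fun b' _ => ?_
        simp only [Matrix.of_apply]
        ring

end AuxiliaryLemmas

set_option maxHeartbeats 1000000 in
/-- Lemma: output equivalence forces a peripheral eigenvalue of `T₁₂`. -/
theorem outputEquiv_chan12_peripheral_eigenvalue {d₁ d₂ k : ℕ}
    (V₁ : Matrix (Fin d₁ × Fin k) (Fin d₁) ℂ) (ρ₁ : Matrix (Fin d₁) (Fin d₁) ℂ)
    (V₂ : Matrix (Fin d₂ × Fin k) (Fin d₂) ℂ) (ρ₂ : Matrix (Fin d₂) (Fin d₂) ℂ)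
    (h₁ : IsIrreducible V₁ ρ₁) (h₂ : IsIrreducible V₂ ρ₂)
    (heq : OutputEquiv V₁ ρ₁ V₂ ρ₂) :
    ∃ (c : ℂ) (F : Matrix (Fin d₁) (Fin d₂) ℂ), ‖c‖ = 1 ∧ F ≠ 0 ∧
      chan12 V₁ V₂ F = c • F := by
  obtain ⟨h₁V, ⟨hρ₁psd, hρ₁tr⟩, -, -, -⟩ := h₁
  obtain ⟨h₂V, ⟨hρ₂psd, hρ₂tr⟩, -, -, -⟩ := h₂
  have hd₁ : 0 < d₁ := by
    by_contra h
    push_neg at h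
    have hz : d₁ = 0 := Nat.le_zero.mp h
    subst hz
    simp [Matrix.trace] at hρ₁tr
  have hd₂ : 0 < d₂ := by
    by_contra h
    push_neg at h
    have hz : d₂ = 0 := Nat.le_zero.mp h
    subst hz
    simp [Matrix.trace] at hρ₂tr
  haveI : Nonempty (Fin d₁ × Fin d₂) := ⟨(⟨0, hd₁⟩, ⟨0, hd₂⟩)⟩
  by_contra hcon
  push_neg at hcon
  -- Step 1: all spectrum points of the transfer matrix have modulus < 1
  have hspec : ∀ c ∈ spectrum ℂ (transferL V₁ V₂), Complex.abs c < 1 := by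
    intro c hc
    obtain ⟨w, hw0, hw⟩ := spectrum_conj_eigen (transferL V₁ V₂) c hc
    set F : Matrix (Fin d₁) (Fin d₂) ℂ := Matrix.of (fun a b' => w (a, b')) with hFdef
    have hFne : F ≠ 0 := by
      intro hF0
      apply hw0
      funext p
      have h9 : F p.1 p.2 = 0 := by rw [hF0]; rfl
      simpa [hFdef] using h9
    have heig : chan12 V₁ V₂ F = (conj c) • F := by
      ext a b
      have h1 := transferL_conjT_mulVec V₁ V₂ w a b
      rw [hw] at h1
      rw [← h1]
      simp [hFdef, Matrix.smul_apply, smul_eq_mul]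
    have hle := eigenvalue_abs_le_one h₁V h₂V hFne heig
    have hne : Complex.abs (conj c) ≠ 1 := fun habs => hcon (conj c) F habs hFne heig
    have h10 := lt_of_le_of_ne hle hne
    rwa [Complex.abs_conj] at h10
  -- Step 2: choose a suitable ε and a power with small entries
  set Pm := ρ₁ ⊗ₖ (ρ₂.map (starRingEnd ℂ)) with hPmdef
  set CP : ℝ := (Fintype.card (Fin d₁ × Fin d₂) : ℝ)
    * (∑ q, ∑ q', Complex.abs (Pm q q')) with hCPdef
  have hCP0 : 0 ≤ CP := mul_nonneg (Nat.cast_nonneg _)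
    (Finset.sum_nonneg fun q _ => Finset.sum_nonneg fun q' _ => Complex.abs.nonneg _)
  set D : ℝ := ((d₁ * d₁ : ℕ) : ℝ) * CP with hDdef
  have hD0 : 0 ≤ D := mul_nonneg (Nat.cast_nonneg _) hCP0
  set ε : ℝ := min (1 / (D + 1)) 1 with hεdef
  have hεpos : 0 < ε := lt_min (by positivity) one_pos
  obtain ⟨n, hn1, hsmall⟩ := exists_small_pow (transferL V₁ V₂) hspec hεpos
  -- Step 3: lower bound from chain 1
  have hlow := lower_bound h₁V hρ₁psd hρ₁tr n
  -- Step 4: upper bound via the transfer matrix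
  have hphiC : ((∑ i : Fin n → Fin k, ∑ j : Fin n → Fin k,
      Complex.abs ((krausWord V₁ i * ρ₁ * (krausWord V₁ j)ᴴ).trace) ^ 2 : ℝ) : ℂ)
      = (((transferL V₁ V₂) ^ n) * Pm * (((transferL V₁ V₂) ^ n))ᴴ).trace := by
    rw [hPmdef, ← phi_eq_trace V₁ V₂ ρ₁ ρ₂ n]
    push_cast
    refine Finset.sum_congr rfl fun i _ => Finset.sum_congr rfl fun j _ => ?_
    rw [← heq n hn1 i j, Complex.mul_conj, Complex.normSq_eq_abs]
    push_cast
    ring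
  have hnnS : 0 ≤ ∑ i : Fin n → Fin k, ∑ j : Fin n → Fin k,
      Complex.abs ((krausWord V₁ i * ρ₁ * (krausWord V₁ j)ᴴ).trace) ^ 2 :=
    Finset.sum_nonneg fun i _ => Finset.sum_nonneg fun j _ => sq_nonneg _
  have habs := abs_trace_le ((transferL V₁ V₂) ^ n) Pm
    (fun p q => (hsmall p q).le) hεpos.le
  have hup : (∑ i : Fin n → Fin k, ∑ j : Fin n → Fin k,
      Complex.abs ((krausWord V₁ i * ρ₁ * (krausWord V₁ j)ᴴ).trace) ^ 2)
      ≤ CP * ε ^ 2 := by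
    calc (∑ i : Fin n → Fin k, ∑ j : Fin n → Fin k,
        Complex.abs ((krausWord V₁ i * ρ₁ * (krausWord V₁ j)ᴴ).trace) ^ 2)
        = Complex.abs (((∑ i : Fin n → Fin k, ∑ j : Fin n → Fin k,
            Complex.abs ((krausWord V₁ i * ρ₁ * (krausWord V₁ j)ᴴ).trace) ^ 2 : ℝ) : ℂ)) := by
          rw [Complex.abs_ofReal, abs_of_nonneg hnnS]
      _ = Complex.abs ((((transferL V₁ V₂) ^ n) * Pm
            * (((transferL V₁ V₂) ^ n))ᴴ).trace) := by rw [hphiC]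
      _ ≤ (Fintype.card (Fin d₁ × Fin d₂) : ℝ)
            * (∑ q, ∑ q', Complex.abs (Pm q q')) * ε ^ 2 := habs
      _ = CP * ε ^ 2 := by rw [hCPdef]
  -- Step 5: contradiction
  have hfinal : (1 : ℝ) ≤ D * ε ^ 2 := by
    refine hlow.trans ?_
    calc ((d₁ * d₁ : ℕ) : ℝ) * ∑ i : Fin n → Fin k, ∑ j : Fin n → Fin k,
        Complex.abs ((krausWord V₁ i * ρ₁ * (krausWord V₁ j)ᴴ).trace) ^ 2
        ≤ ((d₁ * d₁ : ℕ) : ℝ) * (CP * ε ^ 2) :=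
          mul_le_mul_of_nonneg_left hup (Nat.cast_nonneg _)
      _ = D * ε ^ 2 := by rw [hDdef]; ring
  have hεle : ε ≤ 1 / (D + 1) := min_le_left _ _
  have hεle1 : ε ≤ 1 := min_le_right _ _
  have hsq : D * ε ^ 2 ≤ D * ε := by nlinarith
  have h7 : D * ε ≤ D * (1 / (D + 1)) := mul_le_mul_of_nonneg_left hεle hD0
  have h8 : D * (1 / (D + 1)) < 1 := by
    rw [mul_one_div, div_lt_one (by linarith)]
    linarith
  linarith


end QMCPaper
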